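/- In Y_{m|n}[[u^{-1}, v^{-1}]] one has, for every i = 1,…,m+n−1 and every l ≥ 0, the identity (u−v)[e_i(u), (e_i(v) − e_i(u))^l] = (−1)^{|i+1|} l (e_i(v) − e_i(u))^{l+1} = (−1)^{|i|} l (e_i(v) − e_i(u))^{l+1}. -/

import Mathlib

/-- the series Σ_r f r · u^{-r}, viewed in A[[u^{-1}, v^{-1}]] (variable 0 is u^{-1},
variable 1 is v^{-1}). -/
noncomputable def inU {A : Type*} [Semiring A] (f : ℕ → A) : MvPowerSeries (Fin 2) A :=
  fun d => if d 1 = 0 then f (d 0) else 0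

/-- the series Σ_r f r · v^{-r} in A[[u^{-1}, v^{-1}]]. -/
noncomputable def inV {A : Type*} [Semiring A] (f : ℕ → A) : MvPowerSeries (Fin 2) A :=
  fun d => if d 0 = 0 then f (d 1) else 0

/-- coefficient of u^{-a} v^{-b}. -/
noncomputable def cf2 {A : Type*} [Semiring A] (F : MvPowerSeries (Fin 2) A) (a b : ℕ) : A :=
  MvPowerSeries.coeff (R := A) (Finsupp.single (0 : Fin 2) a + Finsupp.single 1 b) F

/-- 1-based parity: |i| = 0 for 1 ≤ i ≤ m, |i| = 1 for i > m. -/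
def pnat (m i : ℕ) : ℕ := if i ≤ m then 0 else 1

namespace BKhelp
open Finsupp MvPowerSeries
variable {A : Type*} [Ring A]
abbrev R2 (A : Type*) [Ring A] := MvPowerSeries (Fin 2) A



lemma s00 (a : ℕ) : (Finsupp.single (0:Fin 2) a) 0 = a := Finsupp.single_eq_same
lemma s01 (a : ℕ) : (Finsupp.single (0:Fin 2) a) 1 = 0 := Finsupp.single_eq_of_ne (by decide)
lemma s10 (a : ℕ) : (Finsupp.single (1:Fin 2) a) 0 = 0 := Finsupp.single_eq_of_ne (by decide)
lemma s11 (a : ℕ) : (Finsupp.single (1:Fin 2) a) 1 = a := Finsupp.single_eq_same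

lemma fin2_decomp (d : Fin 2 →₀ ℕ) :
    d = Finsupp.single 0 (d 0) + Finsupp.single 1 (d 1) := by
  ext x; fin_cases x <;> simp

/-- left-factor vanishing propagates -/
lemma van_mul_left (X Y : R2 A) (j : Fin 2)
    (hX : ∀ d, d j = 0 → MvPowerSeries.coeff (R := A) d X = 0) :
    ∀ d : Fin 2 →₀ ℕ, d j = 0 → MvPowerSeries.coeff (R := A) d (X * Y) = 0 := by
  intro d hd
  rw [MvPowerSeries.coeff_mul]
  apply Finset.sum_eq_zero
  intro p hp
  have h := Finset.HasAntidiagonal.mem_antidiagonal.mp hp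
  have h1 : p.1 j + p.2 j = d j := by rw [← Finsupp.add_apply, h]
  have : p.1 j = 0 := by omega
  rw [hX _ this, zero_mul]

lemma van_mul_right (X Y : R2 A) (j : Fin 2)
    (hY : ∀ d, d j = 0 → MvPowerSeries.coeff (R := A) d Y = 0) :
    ∀ d : Fin 2 →₀ ℕ, d j = 0 → MvPowerSeries.coeff (R := A) d (X * Y) = 0 := by
  intro d hd
  rw [MvPowerSeries.coeff_mul]
  apply Finset.sum_eq_zero
  intro p hp
  have h := Finset.HasAntidiagonal.mem_antidiagonal.mp hp
  have h1 : p.1 j + p.2 j = d j := by rw [← Finsupp.add_apply, h]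
  have : p.2 j = 0 := by omega
  rw [hY _ this, mul_zero]

lemma van_mul_ne (X Y : R2 A) (j : Fin 2)
    (hX : ∀ d, d j ≠ 0 → MvPowerSeries.coeff (R := A) d X = 0)
    (hY : ∀ d, d j ≠ 0 → MvPowerSeries.coeff (R := A) d Y = 0) :
    ∀ d : Fin 2 →₀ ℕ, d j ≠ 0 → MvPowerSeries.coeff (R := A) d (X * Y) = 0 := by
  intro d hd
  rw [MvPowerSeries.coeff_mul]
  apply Finset.sum_eq_zero
  intro p hp
  have h := Finset.HasAntidiagonal.mem_antidiagonal.mp hp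
  have h1 : p.1 j + p.2 j = d j := by rw [← Finsupp.add_apply, h]
  rcases Nat.eq_zero_or_pos (p.1 j) with h0 | h0
  · have : p.2 j ≠ 0 := by omega
    rw [hY _ this, mul_zero]
  · rw [hX _ (by omega), zero_mul]



lemma sub_add_single_cancel {p : Fin 2 →₀ ℕ} {j : Fin 2} (h : p j ≠ 0) :
    p - Finsupp.single j 1 + Finsupp.single j 1 = p := by
  ext x
  rw [Finsupp.add_apply, Finsupp.tsub_apply]
  by_cases hxj : x = j
  · subst hxj; rw [Finsupp.single_eq_same]; omega
  · rw [Finsupp.single_eq_of_ne' (Ne.symm hxj)]; omega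

lemma mem_antidiag_of_shift_right {p : (Fin 2 →₀ ℕ) × (Fin 2 →₀ ℕ)} {d : Fin 2 →₀ ℕ}
    {j : Fin 2} (hp : p.1 + p.2 = d + Finsupp.single j 1) (h : p.2 j ≠ 0) :
    p.1 + (p.2 - Finsupp.single j 1) = d := by
  ext x
  have hx : p.1 x + p.2 x = d x + (Finsupp.single j 1) x := by
    rw [← Finsupp.add_apply, ← Finsupp.add_apply, hp]
  rw [Finsupp.add_apply, Finsupp.tsub_apply]
  by_cases hxj : x = j
  · subst hxj; rw [Finsupp.single_eq_same] at hx ⊢; omega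
  · rw [Finsupp.single_eq_of_ne' (Ne.symm hxj)] at hx ⊢; omega

lemma mem_antidiag_of_shift_left {p : (Fin 2 →₀ ℕ) × (Fin 2 →₀ ℕ)} {d : Fin 2 →₀ ℕ}
    {j : Fin 2} (hp : p.1 + p.2 = d + Finsupp.single j 1) (h : p.1 j ≠ 0) :
    (p.1 - Finsupp.single j 1) + p.2 = d := by
  ext x
  have hx : p.1 x + p.2 x = d x + (Finsupp.single j 1) x := by
    rw [← Finsupp.add_apply, ← Finsupp.add_apply, hp]
  rw [Finsupp.add_apply, Finsupp.tsub_apply]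
  by_cases hxj : x = j
  · subst hxj; rw [Finsupp.single_eq_same] at hx ⊢; omega
  · rw [Finsupp.single_eq_of_ne' (Ne.symm hxj)] at hx ⊢; omega

/-- shift on the right factor -/
lemma coeff_mul_shift_right (X Y : R2 A) (j : Fin 2)
    (hY : ∀ d, d j = 0 → MvPowerSeries.coeff (R := A) d Y = 0) (d : Fin 2 →₀ ℕ) :
    MvPowerSeries.coeff (R := A) (d + Finsupp.single j 1) (X * Y)
      = ∑ p ∈ Finset.HasAntidiagonal.antidiagonal d,
          MvPowerSeries.coeff (R := A) p.1 X * MvPowerSeries.coeff (R := A) (p.2 + Finsupp.single j 1) Y := by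
  classical
  rw [MvPowerSeries.coeff_mul]
  have himg :
      ∑ p ∈ Finset.HasAntidiagonal.antidiagonal d,
          MvPowerSeries.coeff (R := A) p.1 X * MvPowerSeries.coeff (R := A) (p.2 + Finsupp.single j 1) Y
        = ∑ p ∈ (Finset.HasAntidiagonal.antidiagonal d).image
            (fun p : (Fin 2 →₀ ℕ) × (Fin 2 →₀ ℕ) => (p.1, p.2 + Finsupp.single j 1)),
            MvPowerSeries.coeff (R := A) p.1 X * MvPowerSeries.coeff (R := A) p.2 Y := by
    rw [Finset.sum_image]
    intro p _ q _ h
    injection h with h1 h2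
    exact Prod.ext h1 (add_right_cancel h2)
  rw [himg]
  apply (Finset.sum_subset _ _).symm
  · intro p hp
    simp only [Finset.mem_image] at hp
    obtain ⟨q, hq, rfl⟩ := hp
    have hq' := Finset.HasAntidiagonal.mem_antidiagonal.mp hq
    rw [Finset.HasAntidiagonal.mem_antidiagonal, ← add_assoc, hq']
  · intro p hp hnp
    have hp' := Finset.HasAntidiagonal.mem_antidiagonal.mp hp
    by_cases h2 : p.2 j = 0
    · rw [hY _ h2, mul_zero]
    · exfalso; apply hnp
      simp only [Finset.mem_image]
      refine ⟨(p.1, p.2 - Finsupp.single j 1), ?_, ?_⟩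
      · exact Finset.HasAntidiagonal.mem_antidiagonal.mpr (mem_antidiag_of_shift_right hp' h2)
      · exact Prod.ext rfl (sub_add_single_cancel h2)

/-- shift on the left factor -/
lemma coeff_mul_shift_left (X Y : R2 A) (j : Fin 2)
    (hX : ∀ d, d j = 0 → MvPowerSeries.coeff (R := A) d X = 0) (d : Fin 2 →₀ ℕ) :
    MvPowerSeries.coeff (R := A) (d + Finsupp.single j 1) (X * Y)
      = ∑ p ∈ Finset.HasAntidiagonal.antidiagonal d,
          MvPowerSeries.coeff (R := A) (p.1 + Finsupp.single j 1) X * MvPowerSeries.coeff (R := A) p.2 Y := by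
  classical
  rw [MvPowerSeries.coeff_mul]
  have himg :
      ∑ p ∈ Finset.HasAntidiagonal.antidiagonal d,
          MvPowerSeries.coeff (R := A) (p.1 + Finsupp.single j 1) X * MvPowerSeries.coeff (R := A) p.2 Y
        = ∑ p ∈ (Finset.HasAntidiagonal.antidiagonal d).image
            (fun p : (Fin 2 →₀ ℕ) × (Fin 2 →₀ ℕ) => (p.1 + Finsupp.single j 1, p.2)),
            MvPowerSeries.coeff (R := A) p.1 X * MvPowerSeries.coeff (R := A) p.2 Y := by
    rw [Finset.sum_image]
    intro p _ q _ h
    injection h with h1 h2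
    exact Prod.ext (add_right_cancel h1) h2
  rw [himg]
  apply (Finset.sum_subset _ _).symm
  · intro p hp
    simp only [Finset.mem_image] at hp
    obtain ⟨q, hq, rfl⟩ := hp
    have hq' := Finset.HasAntidiagonal.mem_antidiagonal.mp hq
    rw [Finset.HasAntidiagonal.mem_antidiagonal, add_right_comm, hq']
  · intro p hp hnp
    have hp' := Finset.HasAntidiagonal.mem_antidiagonal.mp hp
    by_cases h1 : p.1 j = 0
    · rw [hX _ h1, zero_mul]
    · exfalso; apply hnp
      simp only [Finset.mem_image]
      refine ⟨(p.1 - Finsupp.single j 1, p.2), ?_, ?_⟩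
      · exact Finset.HasAntidiagonal.mem_antidiagonal.mpr (mem_antidiag_of_shift_left hp' h1)
      · exact Prod.ext (sub_add_single_cancel h1) rfl


/-- the coefficient-wise "multiplication by (u - v)" -/
noncomputable def Del (X : R2 A) : R2 A :=
  fun d => X (d + Finsupp.single 0 1) - X (d + Finsupp.single 1 1)

lemma coeff_del (X : R2 A) (d : Fin 2 →₀ ℕ) :
    MvPowerSeries.coeff (R := A) d (Del X)
      = MvPowerSeries.coeff (R := A) (d + Finsupp.single 0 1) X
        - MvPowerSeries.coeff (R := A) (d + Finsupp.single 1 1) X := rfl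

lemma del_mul_right (X Y : R2 A)
    (h0 : ∀ d, d 0 = 0 → MvPowerSeries.coeff (R := A) d Y = 0)
    (h1 : ∀ d, d 1 = 0 → MvPowerSeries.coeff (R := A) d Y = 0) :
    Del (X * Y) = X * Del Y := by
  apply MvPowerSeries.ext
  intro d
  rw [coeff_del, coeff_mul_shift_right X Y 0 h0 d, coeff_mul_shift_right X Y 1 h1 d,
    ← Finset.sum_sub_distrib, MvPowerSeries.coeff_mul]
  apply Finset.sum_congr rfl
  intro p _
  rw [← mul_sub, coeff_del]

lemma del_mul_left (X Y : R2 A)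
    (h0 : ∀ d, d 0 = 0 → MvPowerSeries.coeff (R := A) d X = 0)
    (h1 : ∀ d, d 1 = 0 → MvPowerSeries.coeff (R := A) d X = 0) :
    Del (X * Y) = Del X * Y := by
  apply MvPowerSeries.ext
  intro d
  rw [coeff_del, coeff_mul_shift_left X Y 0 h0 d, coeff_mul_shift_left X Y 1 h1 d,
    ← Finset.sum_sub_distrib, MvPowerSeries.coeff_mul]
  apply Finset.sum_congr rfl
  intro p _
  rw [← sub_mul, coeff_del]

/-- telescoping identity in any ring -/
lemma telescope {R : Type*} [Ring R] (x d : R) (σ : ℤ) :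
    ∀ l : ℕ, x * d ^ l - σ ^ l • (d ^ l * x)
      = ∑ k ∈ Finset.range l, σ ^ k • (d ^ k * (x * d - σ • (d * x)) * d ^ (l - 1 - k))
  | 0 => by simp
  | (l + 1) => by
    have ih := telescope x d σ l
    rw [Finset.sum_range_succ]
    have hterm : ∀ k ∈ Finset.range l,
        σ ^ k • (d ^ k * (x * d - σ • (d * x)) * d ^ (l + 1 - 1 - k))
          = (σ ^ k • (d ^ k * (x * d - σ • (d * x)) * d ^ (l - 1 - k))) * d := by
      intro k hk
      have hk' : k < l := Finset.mem_range.mp hk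
      rw [show l + 1 - 1 - k = (l - 1 - k) + 1 by omega]
      simp only [pow_succ, smul_mul_assoc, mul_assoc]
    rw [Finset.sum_congr rfl hterm, ← Finset.sum_mul, ← ih]
    have hl : l + 1 - 1 - l = 0 := by omega
    rw [hl, pow_zero, mul_one]
    simp only [pow_succ, mul_sub, sub_mul, smul_sub, mul_smul_comm, smul_mul_assoc,
      smul_smul, mul_assoc]
    abel


variable {A : Type*} [Ring A]

section Coeffs
variable (e : ℕ → A)

lemma coeff_inU (d : Fin 2 →₀ ℕ) :
    MvPowerSeries.coeff (R := A) d (inU e) = if d 1 = 0 then e (d 0) else 0 := rfl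

lemma coeff_inV (d : Fin 2 →₀ ℕ) :
    MvPowerSeries.coeff (R := A) d (inV e) = if d 0 = 0 then e (d 1) else 0 := rfl

variable (he0 : e 0 = 0)
include he0

lemma vanU0 : ∀ d : Fin 2 →₀ ℕ, d 0 = 0 → MvPowerSeries.coeff (R := A) d (inU e) = 0 := by
  intro d hd
  rw [coeff_inU, hd, he0, ite_self]

lemma vanV1 : ∀ d : Fin 2 →₀ ℕ, d 1 = 0 → MvPowerSeries.coeff (R := A) d (inV e) = 0 := by
  intro d hd
  rw [coeff_inV, hd, he0, ite_self]

omit he0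

lemma vanU1 : ∀ d : Fin 2 →₀ ℕ, d 1 ≠ 0 → MvPowerSeries.coeff (R := A) d (inU e) = 0 := by
  intro d hd
  rw [coeff_inU, if_neg hd]

lemma vanV0 : ∀ d : Fin 2 →₀ ℕ, d 0 ≠ 0 → MvPowerSeries.coeff (R := A) d (inV e) = 0 := by
  intro d hd
  rw [coeff_inV, if_neg hd]

lemma coeff_UV (a b : ℕ) :
    MvPowerSeries.coeff (R := A) (Finsupp.single 0 a + Finsupp.single 1 b) (inU e * inV e)
      = e a * e b := by
  classical
  rw [MvPowerSeries.coeff_mul]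
  have hm : ((Finsupp.single (0:Fin 2) a, Finsupp.single (1:Fin 2) b))
      ∈ Finset.HasAntidiagonal.antidiagonal (Finsupp.single (0:Fin 2) a + Finsupp.single (1:Fin 2) b) :=
    Finset.HasAntidiagonal.mem_antidiagonal.mpr rfl
  rw [Finset.sum_eq_single_of_mem _ hm]
  · rw [coeff_inU, coeff_inV, if_pos (s01 a), if_pos (s10 b), s00, s11]
  · intro p hp hne
    have hp' := Finset.HasAntidiagonal.mem_antidiagonal.mp hp
    by_cases h1 : p.1 1 = 0
    · by_cases h2 : p.2 0 = 0
      · exfalso; apply hne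
        have e0 : p.1 0 + p.2 0 = a := by
          have := DFunLike.congr_fun hp' 0
          simpa [s00, s10] using this
        have e1 : p.1 1 + p.2 1 = b := by
          have := DFunLike.congr_fun hp' 1
          simpa [s01, s11] using this
        have hp1 : p.1 = Finsupp.single 0 a := by
          rw [fin2_decomp p.1, h1]
          simp only [Finsupp.single_zero, add_zero]
          congr 1
          omega
        have hp2 : p.2 = Finsupp.single 1 b := by
          rw [fin2_decomp p.2, h2]
          simp only [Finsupp.single_zero, zero_add]
          congr 1
          omega
        exact Prod.ext hp1 hp2
      · rw [coeff_inV, if_neg h2, mul_zero]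
    · rw [coeff_inU, if_neg h1, zero_mul]

lemma coeff_VU (a b : ℕ) :
    MvPowerSeries.coeff (R := A) (Finsupp.single 0 a + Finsupp.single 1 b) (inV e * inU e)
      = e b * e a := by
  classical
  rw [MvPowerSeries.coeff_mul]
  have hm : ((Finsupp.single (1:Fin 2) b, Finsupp.single (0:Fin 2) a))
      ∈ Finset.HasAntidiagonal.antidiagonal (Finsupp.single (0:Fin 2) a + Finsupp.single (1:Fin 2) b) :=
    Finset.HasAntidiagonal.mem_antidiagonal.mpr (add_comm _ _)
  rw [Finset.sum_eq_single_of_mem _ hm]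
  · rw [coeff_inU, coeff_inV, if_pos (s10 b), if_pos (s01 a), s00, s11]
  · intro p hp hne
    have hp' := Finset.HasAntidiagonal.mem_antidiagonal.mp hp
    by_cases h1 : p.1 0 = 0
    · by_cases h2 : p.2 1 = 0
      · exfalso; apply hne
        have e0 : p.1 0 + p.2 0 = a := by
          have := DFunLike.congr_fun hp' 0
          simpa [s00, s10] using this
        have e1 : p.1 1 + p.2 1 = b := by
          have := DFunLike.congr_fun hp' 1
          simpa [s01, s11] using this
        have hp1 : p.1 = Finsupp.single 1 b := by
          rw [fin2_decomp p.1, h1]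
          simp only [Finsupp.single_zero, zero_add]
          congr 1
          omega
        have hp2 : p.2 = Finsupp.single 0 a := by
          rw [fin2_decomp p.2, h2]
          simp only [Finsupp.single_zero, add_zero]
          congr 1
          omega
        exact Prod.ext hp1 hp2
      · rw [coeff_inU, if_neg h2, mul_zero]
    · rw [coeff_inV, if_neg h1, zero_mul]

/-- reindexing sums over the antidiagonal of a single -/
lemma single_eq_self_of_antidiag {j : Fin 2} {a : ℕ}
    {p : (Fin 2 →₀ ℕ) × (Fin 2 →₀ ℕ)} (hp : p.1 + p.2 = Finsupp.single j a) :
    Finsupp.single j (p.1 j) = p.1 ∧ Finsupp.single j (p.2 j) = p.2 := by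
  have hco : ∀ x, x ≠ j → p.1 x = 0 ∧ p.2 x = 0 := by
    intro x hx
    have := DFunLike.congr_fun hp x
    simp only [Finsupp.coe_add, Pi.add_apply, Finsupp.single_apply,
      if_neg (Ne.symm hx)] at this
    omega
  constructor
  · ext x
    by_cases hx : x = j
    · subst hx; rw [Finsupp.single_eq_same]
    · rw [Finsupp.single_eq_of_ne' (Ne.symm hx), (hco x hx).1]
  · ext x
    by_cases hx : x = j
    · subst hx; rw [Finsupp.single_eq_same]
    · rw [Finsupp.single_eq_of_ne' (Ne.symm hx), (hco x hx).2]

lemma sum_antidiag_single (j : Fin 2) (a : ℕ)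
    (g : ((Fin 2 →₀ ℕ) × (Fin 2 →₀ ℕ)) → A) :
    ∑ p ∈ Finset.HasAntidiagonal.antidiagonal (Finsupp.single j a), g p
      = ∑ q ∈ Finset.HasAntidiagonal.antidiagonal a, g (Finsupp.single j q.1, Finsupp.single j q.2) := by
  classical
  apply Finset.sum_nbij' (i := fun p => (p.1 j, p.2 j))
    (j := fun q => (Finsupp.single j q.1, Finsupp.single j q.2))
  · intro p hp
    have hp' := Finset.HasAntidiagonal.mem_antidiagonal.mp hp
    rw [Finset.HasAntidiagonal.mem_antidiagonal]
    have := DFunLike.congr_fun hp' j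
    simpa [Finsupp.single_eq_same] using this
  · intro q hq
    have hq' := Finset.HasAntidiagonal.mem_antidiagonal.mp hq
    rw [Finset.HasAntidiagonal.mem_antidiagonal, ← Finsupp.single_add, hq']
  · intro p hp
    obtain ⟨h1, h2⟩ := single_eq_self_of_antidiag (Finset.HasAntidiagonal.mem_antidiagonal.mp hp)
    exact Prod.ext h1 h2
  · intro q hq
    simp [Finsupp.single_eq_same]
  · intro p hp
    obtain ⟨h1, h2⟩ := single_eq_self_of_antidiag (Finset.HasAntidiagonal.mem_antidiagonal.mp hp)
    rw [h1, h2]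

/-- the key symmetry between coefficients of (inU e)² and (inV e)². -/
lemma coeff_EE_FF (a : ℕ) :
    MvPowerSeries.coeff (R := A) (Finsupp.single 0 a) (inU e * inU e)
      = MvPowerSeries.coeff (R := A) (Finsupp.single 1 a) (inV e * inV e) := by
  rw [MvPowerSeries.coeff_mul, MvPowerSeries.coeff_mul,
    sum_antidiag_single, sum_antidiag_single]
  apply Finset.sum_congr rfl
  intro q _
  rw [coeff_inU, coeff_inU, coeff_inV, coeff_inV,
    if_pos (s01 q.1), if_pos (s01 q.2), if_pos (s10 q.1), if_pos (s10 q.2),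
    s00, s00, s11, s11]

end Coeffs


variable {A : Type*} [Ring A]

lemma cf2_eq (X : MvPowerSeries (Fin 2) A) (a b : ℕ) :
    cf2 X a b = MvPowerSeries.coeff (R := A) (Finsupp.single 0 a + Finsupp.single 1 b) X := rfl

lemma zsmul_eq_zsmul_of_even_sub {M : Type*} [AddCommGroup M] {x : M} (hx : x + x = 0)
    {z w : ℤ} (h : Even (z - w)) : z • x = w • x := by
  obtain ⟨t, ht⟩ := h
  have hz : z = w + (t + t) := by omega
  rw [hz, add_smul, add_smul, ← smul_add, hx, smul_zero, add_zero]

lemma even_sub_sum (l : ℕ) : Even ((l : ℤ) - ∑ k ∈ Finset.range l, (-1 : ℤ) ^ k) := by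
  induction l with
  | zero => simp
  | succ l ih =>
      rw [Finset.sum_range_succ]
      have h2 : Even (1 - (-1 : ℤ) ^ l) := by
        rcases Nat.even_or_odd l with h | h
        · rw [h.neg_one_pow]; simp
        · rw [h.neg_one_pow]; decide
      have hre : ((l + 1 : ℕ) : ℤ) - ((∑ k ∈ Finset.range l, (-1 : ℤ) ^ k) + (-1 : ℤ) ^ l)
          = (((l : ℕ) : ℤ) - ∑ k ∈ Finset.range l, (-1 : ℤ) ^ k) + (1 - (-1 : ℤ) ^ l) := by
        push_cast; ring
      rw [hre]
      exact ih.add h2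

/-- In the odd case (σ = -1), twice the square (e(u) - e(v))² vanishes. -/
lemma twoQ (e : ℕ → A) (he0 : e 0 = 0) (c : ℤ) (hc : c = 1 ∨ c = -1)
    (hrelm : ∀ a b : ℕ,
      cf2 (inU e * inV e - (-1 : ℤ) • (inV e * inU e)) (a+1) b
      - cf2 (inU e * inV e - (-1 : ℤ) • (inV e * inU e)) a (b+1)
      = c • cf2 ((inU e - inV e) * (inU e - inV e)) a b) :
    ∀ a b : ℕ, cf2 ((inU e - inV e) * (inU e - inV e)) a b
      + cf2 ((inU e - inV e) * (inU e - inV e)) a b = 0 := by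
  have hW : ∀ a b : ℕ, cf2 (inU e * inV e - (-1 : ℤ) • (inV e * inU e)) a b
      = e a * e b + e b * e a := by
    intro a b
    rw [cf2_eq, map_sub, map_zsmul, coeff_UV, coeff_VU, neg_one_zsmul, sub_neg_eq_add]
  have hEE : ∀ a b : ℕ,
      MvPowerSeries.coeff (R := A) (Finsupp.single 0 a + Finsupp.single 1 b) (inU e * inU e)
      = MvPowerSeries.coeff (R := A) (Finsupp.single 0 b + Finsupp.single 1 a) (inV e * inV e) := by
    intro a b
    by_cases hb : b = 0
    · subst hb
      rw [show Finsupp.single (0:Fin 2) a + Finsupp.single (1:Fin 2) 0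
            = Finsupp.single (0:Fin 2) a by rw [Finsupp.single_zero, add_zero],
          show Finsupp.single (0:Fin 2) 0 + Finsupp.single (1:Fin 2) a
            = Finsupp.single (1:Fin 2) a by rw [Finsupp.single_zero, zero_add]]
      exact coeff_EE_FF e a
    · rw [van_mul_ne _ _ 1 (vanU1 e) (vanU1 e) _ (by simp [s01, s11, hb]),
        van_mul_ne _ _ 0 (vanV0 e) (vanV0 e) _ (by simp [s00, s10, hb])]
  have hQsymm : ∀ a b : ℕ, cf2 ((inU e - inV e) * (inU e - inV e)) a b
      = cf2 ((inU e - inV e) * (inU e - inV e)) b a := by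
    intro a b
    have hexp : (inU e - inV e) * (inU e - inV e)
        = inU e * inU e - inU e * inV e - inV e * inU e + inV e * inV e := by
      noncomm_ring
    rw [cf2_eq, cf2_eq, hexp, map_add, map_sub, map_sub, map_add, map_sub, map_sub,
      coeff_UV, coeff_VU, coeff_UV, coeff_VU, hEE a b, ← hEE b a]
    abel
  intro a b
  have h1 := hrelm a b
  have h2 := hrelm b a
  rw [hW, hW] at h1 h2
  have hsum : c • cf2 ((inU e - inV e) * (inU e - inV e)) a b
      + c • cf2 ((inU e - inV e) * (inU e - inV e)) b a = 0 := by
    rw [h1.symm, h2.symm]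
    abel
  rw [← hQsymm a b] at hsum
  rw [← smul_add] at hsum
  rcases hc with rfl | rfl
  · rwa [one_smul] at hsum
  · rw [neg_one_zsmul, neg_eq_zero] at hsum
    exact hsum



variable {A : Type*} [Ring A]

lemma idxA (a b : ℕ) : Finsupp.single (0:Fin 2) (a+1) + Finsupp.single (1:Fin 2) b
    = (Finsupp.single (0:Fin 2) a + Finsupp.single (1:Fin 2) b) + Finsupp.single (0:Fin 2) 1 := by
  ext x; fin_cases x <;> simp [Finsupp.single_apply]

lemma idxB (a b : ℕ) : Finsupp.single (0:Fin 2) a + Finsupp.single (1:Fin 2) (b+1)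
    = (Finsupp.single (0:Fin 2) a + Finsupp.single (1:Fin 2) b) + Finsupp.single (1:Fin 2) 1 := by
  ext x; fin_cases x <;> simp [Finsupp.single_apply]

/-- the main computation -/
lemma engine (e : ℕ → A) (he0 : e 0 = 0) (σ c : ℤ) (hσ : σ = 1 ∨ σ = -1)
    (hrelσ : ∀ a b : ℕ,
      cf2 (inU e * inV e - σ • (inV e * inU e)) (a+1) b
      - cf2 (inU e * inV e - σ • (inV e * inU e)) a (b+1)
      = c • cf2 ((inU e - inV e) * (inU e - inV e)) a b)
    (htwo : σ = -1 → ∀ a b : ℕ, cf2 ((inU e - inV e) * (inU e - inV e)) a b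
      + cf2 ((inU e - inV e) * (inU e - inV e)) a b = 0) :
    ∀ (l a b : ℕ),
      cf2 (inU e * (inV e - inU e) ^ l - σ ^ l • ((inV e - inU e) ^ l * inU e)) (a+1) b
      - cf2 (inU e * (inV e - inU e) ^ l - σ ^ l • ((inV e - inU e) ^ l * inU e)) a (b+1)
      = (c * l) • cf2 ((inV e - inU e) ^ (l+1)) a b := by
  have hE0 := vanU0 e he0
  have hE1 := vanU1 e
  have hF1 := vanV1 e he0
  have hF0 := vanV0 e
  set E : MvPowerSeries (Fin 2) A := inU e with hEdef
  set F : MvPowerSeries (Fin 2) A := inV e with hFdef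
  set D : MvPowerSeries (Fin 2) A := F - E with hDdef
  have hDD : (E - F) * (E - F) = D * D := by rw [hDdef]; noncomm_ring
  have htwoD : σ = -1 → ∀ d : Fin 2 →₀ ℕ,
      MvPowerSeries.coeff (R := A) d (D * D) + MvPowerSeries.coeff (R := A) d (D * D) = 0 := by
    intro hs d
    have h := htwo hs (d 0) (d 1)
    rw [cf2_eq, hDD, ← fin2_decomp d] at h
    exact h
  have h2EE : σ = -1 → ∀ d : Fin 2 →₀ ℕ,
      MvPowerSeries.coeff (R := A) d (E * E) + MvPowerSeries.coeff (R := A) d (E * E) = 0 := by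
    intro hs d
    by_cases hd : d 1 = 0
    · have hexp : D * D = F * F - F * E - E * F + E * E := by rw [hDdef]; noncomm_ring
      have hDDEE : MvPowerSeries.coeff (R := A) d (D * D) = MvPowerSeries.coeff (R := A) d (E * E) := by
        rw [hexp, map_add, map_sub, map_sub,
          van_mul_left F F 1 hF1 d hd, van_mul_left F E 1 hF1 d hd,
          van_mul_right E F 1 hF1 d hd]
        simp
      rw [← hDDEE]
      exact htwoD hs d
    · rw [van_mul_ne E E 1 hE1 hE1 d hd]; simp
  have hT1W : E * D - σ • (D * E) = (E * F - σ • (F * E)) - ((1:ℤ) - σ) • (E * E) := by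
    rw [hDdef, mul_sub, sub_mul, smul_sub, sub_smul, one_smul]
    abel
  have hT1_0 : ∀ d : Fin 2 →₀ ℕ, d 0 = 0
      → MvPowerSeries.coeff (R := A) d (E * D - σ • (D * E)) = 0 := by
    intro d hd
    rw [map_sub, map_zsmul, van_mul_left E D 0 hE0 d hd, van_mul_right D E 0 hE0 d hd]
    simp
  have hT1_1 : ∀ d : Fin 2 →₀ ℕ, d 1 = 0
      → MvPowerSeries.coeff (R := A) d (E * D - σ • (D * E)) = 0 := by
    intro d hd
    rw [hT1W, map_sub, map_sub, map_zsmul, map_zsmul,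
      van_mul_right E F 1 hF1 d hd, van_mul_left F E 1 hF1 d hd]
    rcases hσ with rfl | h1
    · simp
    · rw [h1]
      have h2 := h2EE h1 d
      rw [show ((1:ℤ) - -1) = 2 by norm_num, two_smul, h2]
      simp
  have hDelT1 : Del (E * D - σ • (D * E)) = c • (D * D) := by
    apply MvPowerSeries.ext
    intro d
    rw [coeff_del]
    have h := hrelσ (d 0) (d 1)
    rw [cf2_eq, cf2_eq, cf2_eq, idxA, idxB, ← fin2_decomp d, hDD] at h
    have hEE1 : MvPowerSeries.coeff (R := A) (d + Finsupp.single 1 1) (E * E) = 0 := by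
      apply van_mul_ne E E 1 hE1 hE1
      simp [Finsupp.add_apply, s11]
    have hEE0 : ((1:ℤ) - σ) • MvPowerSeries.coeff (R := A) (d + Finsupp.single 0 1) (E * E) = 0 := by
      rcases hσ with rfl | h1
      · simp
      · rw [h1, show ((1:ℤ) - -1) = 2 by norm_num, two_smul]
        exact h2EE h1 _
    rw [hT1W]
    simp only [map_sub, map_zsmul] at h ⊢
    rw [hEE1, hEE0, smul_zero]
    simp only [sub_zero]
    exact h
  -- vanishing for the right part of the telescoping terms
  have hY0 : ∀ j : ℕ, ∀ d : Fin 2 →₀ ℕ, d 0 = 0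
      → MvPowerSeries.coeff (R := A) d ((E * D - σ • (D * E)) * D ^ j) = 0 :=
    fun j => van_mul_left _ _ 0 hT1_0
  have hY1 : ∀ j : ℕ, ∀ d : Fin 2 →₀ ℕ, d 1 = 0
      → MvPowerSeries.coeff (R := A) d ((E * D - σ • (D * E)) * D ^ j) = 0 :=
    fun j => van_mul_left _ _ 1 hT1_1
  intro l a b
  set d : Fin 2 →₀ ℕ := Finsupp.single 0 a + Finsupp.single 1 b with hddef
  rw [cf2_eq, cf2_eq, cf2_eq, idxA, idxB, ← hddef]
  have tel := telescope E D σ l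
  rw [tel]
  rw [map_sum, map_sum, ← Finset.sum_sub_distrib]
  have hterm : ∀ k ∈ Finset.range l,
      MvPowerSeries.coeff (R := A) (d + Finsupp.single 0 1)
          (σ ^ k • (D ^ k * (E * D - σ • (D * E)) * D ^ (l - 1 - k)))
        - MvPowerSeries.coeff (R := A) (d + Finsupp.single 1 1)
          (σ ^ k • (D ^ k * (E * D - σ • (D * E)) * D ^ (l - 1 - k)))
      = c • (σ ^ k • MvPowerSeries.coeff (R := A) d (D ^ (l + 1))) := by
    intro k hk
    have hk' : k < l := Finset.mem_range.mp hk
    rw [map_zsmul, map_zsmul, ← smul_sub]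
    have hzd : MvPowerSeries.coeff (R := A) (d + Finsupp.single 0 1)
          (D ^ k * (E * D - σ • (D * E)) * D ^ (l - 1 - k))
        - MvPowerSeries.coeff (R := A) (d + Finsupp.single 1 1)
          (D ^ k * (E * D - σ • (D * E)) * D ^ (l - 1 - k))
        = MvPowerSeries.coeff (R := A) d (Del (D ^ k * (E * D - σ • (D * E)) * D ^ (l - 1 - k))) :=
      (coeff_del _ d).symm
    rw [hzd, mul_assoc (D ^ k),
      del_mul_right (D ^ k) _ (hY0 (l - 1 - k)) (hY1 (l - 1 - k)),
      del_mul_left _ _ hT1_0 hT1_1, hDelT1, smul_mul_assoc, mul_smul_comm, map_zsmul]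
    have hpow : D ^ k * (D * D * D ^ (l - 1 - k)) = D ^ (l + 1) := by
      rw [← pow_two, ← pow_add, ← pow_add]
      congr 1
      omega
    rw [hpow, smul_comm]
  rw [Finset.sum_congr rfl hterm, ← Finset.smul_sum]
  rw [show ∀ x : A, (c * (l:ℤ)) • x = c • ((l:ℤ) • x) from fun x => mul_smul c _ x]
  congr 1
  rw [← Finset.sum_smul]
  rcases hσ with rfl | h1
  · simp
  · subst h1
    rcases Nat.eq_zero_or_pos l with rfl | hl
    · simp
    · have hx : MvPowerSeries.coeff (R := A) d (D ^ (l + 1))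
          + MvPowerSeries.coeff (R := A) d (D ^ (l + 1)) = 0 := by
        have hpw : D ^ (l + 1) = (D * D) * D ^ (l - 1) := by
          rw [← pow_two, ← pow_add]
          congr 1
          omega
        rw [hpw, MvPowerSeries.coeff_mul, ← Finset.sum_add_distrib]
        apply Finset.sum_eq_zero
        intro p _
        rw [← add_mul, htwoD rfl p.1, zero_mul]
      exact (zsmul_eq_zsmul_of_even_sub hx (even_sub_sum l)).symm
end BKhelp

/-- in Y_{m|n}[[u^{-1}, v^{-1}]], for every i = 1,…,m+n−1 and every l ≥ 0,
(u−v)[e_i(u), (e_i(v) − e_i(u))^l] = (−1)^{|i+1|} l (e_i(v) − e_i(u))^{l+1}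
                                   = (−1)^{|i|} l (e_i(v) − e_i(u))^{l+1}.
Equality of series multiplied by (u−v) is expressed coefficientwise: the coefficient of
u^{-a}v^{-b} of (u−v)F is F_{a+1,b} − F_{a,b+1}.  The element e_i(u) has parity
ε = |i|+|i+1| (mod 2), so the supercommutator with the parity-εl element
(e_i(v)−e_i(u))^l carries the sign (−1)^{εl}. -/
theorem e_bracket_power_identity
    (kk : Type*) [Field kk] (p : ℕ) [CharP kk p] (hp : 0 < p)
    (m n : ℕ) (A : Type*) [Ring A] [Algebra kk A]
    (i : ℕ) (hi1 : 1 ≤ i) (hi2 : i ≤ m + n - 1)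
    (e : ℕ → A) (he0 : e 0 = 0)
    -- defining quadratic relation: (u−v)[e_i(u), e_i(v)] = (−1)^{|i+1|}(e_i(u) − e_i(v))²
    (hrel : ∀ a b : ℕ,
      cf2 (inU e * inV e -
        ((-1 : ℤ) ^ (((pnat m i + pnat m (i+1)) % 2) * ((pnat m i + pnat m (i+1)) % 2))) •
          (inV e * inU e)) (a+1) b -
      cf2 (inU e * inV e -
        ((-1 : ℤ) ^ (((pnat m i + pnat m (i+1)) % 2) * ((pnat m i + pnat m (i+1)) % 2))) •
          (inV e * inU e)) a (b+1) =
      ((-1 : ℤ) ^ (pnat m (i+1))) • cf2 ((inU e - inV e) * (inU e - inV e)) a b) :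
    ∀ (l : ℕ) (a b : ℕ),
      (cf2 (inU e * (inV e - inU e) ^ l -
          ((-1 : ℤ) ^ (((pnat m i + pnat m (i+1)) % 2) * l)) •
            ((inV e - inU e) ^ l * inU e)) (a+1) b -
        cf2 (inU e * (inV e - inU e) ^ l -
          ((-1 : ℤ) ^ (((pnat m i + pnat m (i+1)) % 2) * l)) •
            ((inV e - inU e) ^ l * inU e)) a (b+1) =
        ((-1 : ℤ) ^ (pnat m (i+1)) * l) • cf2 ((inV e - inU e) ^ (l+1)) a b) ∧
      (cf2 (inU e * (inV e - inU e) ^ l -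
          ((-1 : ℤ) ^ (((pnat m i + pnat m (i+1)) % 2) * l)) •
            ((inV e - inU e) ^ l * inU e)) (a+1) b -
        cf2 (inU e * (inV e - inU e) ^ l -
          ((-1 : ℤ) ^ (((pnat m i + pnat m (i+1)) % 2) * l)) •
            ((inV e - inU e) ^ l * inU e)) a (b+1) =
        ((-1 : ℤ) ^ (pnat m i) * l) • cf2 ((inV e - inU e) ^ (l+1)) a b) := by
  have hpi : pnat m i = 0 ∨ pnat m i = 1 := by unfold pnat; split <;> simp
  have hpi1 : pnat m (i+1) = 0 ∨ pnat m (i+1) = 1 := by unfold pnat; split <;> simp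
  have hq : (pnat m i + pnat m (i+1)) % 2 = 0 ∨ (pnat m i + pnat m (i+1)) % 2 = 1 := by omega
  have hσ : ((-1:ℤ) ^ ((pnat m i + pnat m (i+1)) % 2)) = 1
      ∨ ((-1:ℤ) ^ ((pnat m i + pnat m (i+1)) % 2)) = -1 := by
    rcases hq with h | h <;> rw [h] <;> norm_num
  have hqq : ((-1:ℤ) ^ (((pnat m i + pnat m (i+1)) % 2) * ((pnat m i + pnat m (i+1)) % 2)))
      = (-1:ℤ) ^ ((pnat m i + pnat m (i+1)) % 2) := by
    rcases hq with h | h <;> rw [h] <;> norm_num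
  have hc1 : ((-1:ℤ) ^ (pnat m (i+1))) = 1 ∨ ((-1:ℤ) ^ (pnat m (i+1))) = -1 := by
    rcases hpi1 with h | h <;> rw [h] <;> norm_num
  simp only [hqq] at hrel
  have htwo : ((-1:ℤ) ^ ((pnat m i + pnat m (i+1)) % 2)) = -1 →
      ∀ a b : ℕ, cf2 ((inU e - inV e) * (inU e - inV e)) a b
        + cf2 ((inU e - inV e) * (inU e - inV e)) a b = 0 :=
    fun hs => BKhelp.twoQ e he0 _ hc1 (fun a b => by have h := hrel a b; rwa [hs] at h)
  have hrel2 : ∀ a b : ℕ,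
      cf2 (inU e * inV e -
        ((-1 : ℤ) ^ ((pnat m i + pnat m (i+1)) % 2)) • (inV e * inU e)) (a+1) b -
      cf2 (inU e * inV e -
        ((-1 : ℤ) ^ ((pnat m i + pnat m (i+1)) % 2)) • (inV e * inU e)) a (b+1) =
      ((-1 : ℤ) ^ (pnat m i)) • cf2 ((inU e - inV e) * (inU e - inV e)) a b := by
    by_cases hpq : pnat m i = pnat m (i+1)
    · intro a b
      rw [show ((-1:ℤ) ^ (pnat m i)) = ((-1:ℤ) ^ (pnat m (i+1))) from by rw [hpq]]
      exact hrel a b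
    · have hq1 : (pnat m i + pnat m (i+1)) % 2 = 1 := by omega
      have hs : ((-1:ℤ) ^ ((pnat m i + pnat m (i+1)) % 2)) = -1 := by rw [hq1]; norm_num
      have hQ2 := htwo hs
      intro a b
      rw [hrel a b]
      have hcc : ((-1:ℤ) ^ (pnat m i)) = -((-1:ℤ) ^ (pnat m (i+1))) := by
        rcases hpi with h | h <;> rcases hpi1 with h' | h' <;> rw [h, h'] <;>
          first
            | (exfalso; omega)
            | norm_num
      rw [hcc, neg_smul]
      have hadd : ((-1:ℤ) ^ (pnat m (i+1))) • cf2 ((inU e - inV e) * (inU e - inV e)) a b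
          + ((-1:ℤ) ^ (pnat m (i+1))) • cf2 ((inU e - inV e) * (inU e - inV e)) a b = 0 := by
        rw [← smul_add, hQ2 a b, smul_zero]
      exact (neg_eq_of_add_eq_zero_left hadd).symm
  intro l a b
  have hpowl : ((-1:ℤ) ^ (((pnat m i + pnat m (i+1)) % 2) * l))
      = ((-1:ℤ) ^ ((pnat m i + pnat m (i+1)) % 2)) ^ l := by rw [pow_mul]
  simp only [hpowl]
  exact ⟨BKhelp.engine e he0 _ _ hσ hrel htwo l a b,
    BKhelp.engine e he0 _ _ hσ hrel2 htwo l a b⟩
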